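/- For probability distributions P and Q on a finite set with Q_k > 0 whenever P_k > 0, the sup-norm bound ‖P - Q‖_∞ ≤ √(2·D_KL(P‖Q)) holds. In particular, if D_KL(P‖Q) < γ²/8 where γ is the K-boundary margin of Q, then ‖P - Q‖_∞ < γ/2 and the Top-K set of P equals that of Q. -/

import Mathlib

lemma aux_klterm {x y : ℝ} (hx : 0 ≤ x) (hy : 0 ≤ y) (h : y = 0 → x = 0) :
    x - y ≤ x * Real.log (x / y) := by
  rcases eq_or_lt_of_le hx with hx0 | hx0
  · simp [← hx0]; linarith
  · have hy0 : 0 < y := by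
      rcases eq_or_lt_of_le hy with hy0 | hy0
      · exact absurd (h hy0.symm) hx0.ne'
      · exact hy0
    have hlog : Real.log (y / x) ≤ y / x - 1 := Real.log_le_sub_one_of_pos (by positivity)
    have hrw : Real.log (x / y) = -Real.log (y / x) := by
      rw [Real.log_div hx0.ne' hy0.ne', Real.log_div hy0.ne' hx0.ne']; ring
    have h2 : x * (1 - y / x) ≤ x * Real.log (x / y) := by
      rw [hrw]
      nlinarith
    have h3 : x * (1 - y / x) = x - y := by field_simp
    linarith

lemma aux_logsum {x y A B : ℝ} (hx : 0 ≤ x) (hy : 0 ≤ y) (hA : 0 < A) (hB : 0 < B)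
    (h : y = 0 → x = 0) :
    x * Real.log (A / B) + x - y * (A / B) ≤ x * Real.log (x / y) := by
  rcases eq_or_lt_of_le hx with hx0 | hx0
  · simp [← hx0]
    positivity
  · have hy0 : 0 < y := by
      rcases eq_or_lt_of_le hy with hy0 | hy0
      · exact absurd (h hy0.symm) hx0.ne'
      · exact hy0
    have hlog : Real.log (y * A / (x * B)) ≤ y * A / (x * B) - 1 :=
      Real.log_le_sub_one_of_pos (by positivity)
    have hrw : Real.log (y * A / (x * B)) =
        (Real.log A - Real.log B) - (Real.log x - Real.log y) := by
      rw [Real.log_div (by positivity) (by positivity), Real.log_mul hy0.ne' hA.ne',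
        Real.log_mul hx0.ne' hB.ne']
      ring
    rw [hrw] at hlog
    have h2 := mul_le_mul_of_nonneg_left hlog hx0.le
    have h3 : x * (y * A / (x * B) - 1) = y * (A / B) - x := by field_simp
    rw [Real.log_div hx0.ne' hy0.ne', Real.log_div hA.ne' hB.ne']
    linarith


lemma binPinsker {q : ℝ} (hq0 : 0 < q) (hq1 : q < 1) {p : ℝ} (hp0 : 0 ≤ p) (hp1 : p ≤ 1) :
    2 * (p - q) ^ 2 ≤
      p * Real.log p - p * Real.log q +
        ((1 - p) * Real.log (1 - p) - (1 - p) * Real.log (1 - q)) := by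
  set F : ℝ → ℝ := fun x =>
    x * Real.log x - x * Real.log q +
      ((1 - x) * Real.log (1 - x) - (1 - x) * Real.log (1 - q)) - 2 * (x - q) ^ 2 with hFdef
  set G : ℝ → ℝ := fun x =>
    Real.log x - Real.log (1 - x) - Real.log q + Real.log (1 - q) - 4 * (x - q) with hGdef
  have hsub : ∀ x : ℝ, HasDerivAt (fun y : ℝ => 1 - y) (-1) x := by
    intro x
    simpa using (hasDerivAt_id x).const_sub (1 : ℝ)
  have hF : ∀ x ∈ Set.Ioo (0 : ℝ) 1, HasDerivAt F (G x) x := by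
    intro x hx
    obtain ⟨hx0, hx1⟩ := hx
    have h1x : (0 : ℝ) < 1 - x := by linarith
    have d1 : HasDerivAt (fun y : ℝ => y * Real.log y) (Real.log x + 1) x :=
      Real.hasDerivAt_mul_log hx0.ne'
    have d2 : HasDerivAt (fun y : ℝ => y * Real.log q) (1 * Real.log q) x :=
      (hasDerivAt_id x).mul_const _
    have d3 : HasDerivAt (fun y : ℝ => (1 - y) * Real.log (1 - y))
        ((Real.log (1 - x) + 1) * (-1)) x :=
      (Real.hasDerivAt_mul_log h1x.ne').comp x (hsub x)
    have d4 : HasDerivAt (fun y : ℝ => (1 - y) * Real.log (1 - q)) ((-1) * Real.log (1 - q)) x :=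
      (hsub x).mul_const _
    have d5 : HasDerivAt (fun y : ℝ => 2 * (y - q) ^ 2)
        (2 * ((2 : ℕ) * (x - q) ^ 1 * 1)) x :=
      (((hasDerivAt_id x).sub_const q).pow 2).const_mul 2
    have := ((d1.sub d2).add (d3.sub d4)).sub d5
    rw [hGdef]
    convert this using 1
    · rfl
    · rfl
    · rfl
    push_cast
    ring
  have hG : ∀ x ∈ Set.Ioo (0 : ℝ) 1, HasDerivAt G (x⁻¹ + (1 - x)⁻¹ - 4) x := by
    intro x hx
    obtain ⟨hx0, hx1⟩ := hx
    have h1x : (0 : ℝ) < 1 - x := by linarith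
    have d1 : HasDerivAt Real.log x⁻¹ x := Real.hasDerivAt_log hx0.ne'
    have d2 : HasDerivAt (fun y : ℝ => Real.log (1 - y)) ((1 - x)⁻¹ * (-1)) x :=
      (Real.hasDerivAt_log h1x.ne').comp x (hsub x)
    have d5 : HasDerivAt (fun y : ℝ => 4 * (y - q)) (4 * 1) x :=
      ((hasDerivAt_id x).sub_const q).const_mul 4
    have := (((d1.sub d2).sub_const (Real.log q)).add_const (Real.log (1 - q))).sub d5
    rw [hGdef]
    convert this using 1
    · rfl
    · rfl
    · rfl
    ring
  have hGmono : MonotoneOn G (Set.Ioo (0 : ℝ) 1) := by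
    apply monotoneOn_of_hasDerivWithinAt_nonneg (convex_Ioo 0 1)
      (fun x hx => ((hG x hx).continuousAt).continuousWithinAt)
      (f' := fun x => x⁻¹ + (1 - x)⁻¹ - 4)
    · intro x hx
      rw [interior_Ioo] at hx ⊢
      exact (hG x hx).hasDerivWithinAt
    · intro x hx
      rw [interior_Ioo] at hx
      obtain ⟨hx0, hx1⟩ := hx
      have h1x : (0 : ℝ) < 1 - x := by linarith
      have e1 : x * x⁻¹ = 1 := mul_inv_cancel₀ hx0.ne'
      have e2 : (1 - x) * (1 - x)⁻¹ = 1 := mul_inv_cancel₀ h1x.ne'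
      have hi1 : 0 < x⁻¹ := inv_pos.2 hx0
      have hi2 : 0 < (1 - x)⁻¹ := inv_pos.2 h1x
      nlinarith [sq_nonneg (2 * x - 1), mul_pos hi1 hi2, sq_nonneg (x⁻¹ - (1 - x)⁻¹)]
  have hGq : G q = 0 := by rw [hGdef]; ring
  have hFq : F q = 0 := by rw [hFdef]; ring
  have hFc : Continuous F := by
    have c1 : Continuous fun x : ℝ => x * Real.log x := Real.continuous_mul_log
    exact ((c1.sub (continuous_id.mul continuous_const)).add
      ((c1.comp (continuous_const.sub continuous_id)).sub
        ((continuous_const.sub continuous_id).mul continuous_const))).sub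
      (continuous_const.mul ((continuous_id.sub continuous_const).pow 2))
  have hkey : 0 ≤ F p := by
    rcases le_total p q with h | h
    · have hanti : AntitoneOn F (Set.Icc (0 : ℝ) q) := by
        apply antitoneOn_of_hasDerivWithinAt_nonpos (convex_Icc 0 q) hFc.continuousOn
          (f' := G)
        · intro x hx
          rw [interior_Icc] at hx ⊢
          exact (hF x ⟨hx.1, lt_trans hx.2 hq1⟩).hasDerivWithinAt
        · intro x hx
          rw [interior_Icc] at hx
          have hx' : x ∈ Set.Ioo (0 : ℝ) 1 := ⟨hx.1, lt_trans hx.2 hq1⟩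
          have := hGmono hx' ⟨hq0, hq1⟩ hx.2.le
          linarith [hGq ▸ this]
      have := hanti ⟨hp0, h⟩ ⟨hq0.le, le_refl q⟩ h
      linarith [hFq ▸ this]
    · have hmono : MonotoneOn F (Set.Icc q 1) := by
        apply monotoneOn_of_hasDerivWithinAt_nonneg (convex_Icc q 1) hFc.continuousOn
          (f' := G)
        · intro x hx
          rw [interior_Icc] at hx ⊢
          exact (hF x ⟨lt_trans hq0 hx.1, hx.2⟩).hasDerivWithinAt
        · intro x hx
          rw [interior_Icc] at hx
          have hx' : x ∈ Set.Ioo (0 : ℝ) 1 := ⟨lt_trans hq0 hx.1, hx.2⟩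
          have := hGmono ⟨hq0, hq1⟩ hx' hx.1.le
          linarith [hGq ▸ this]
      have := hmono ⟨le_refl q, hq1.le⟩ ⟨h, hp1⟩ h
      linarith [hFq ▸ this]
  rw [hFdef] at hkey
  simp only at hkey
  linarith

/-- Sup-norm Pinsker bound and Top-K stability: `‖P - Q‖_∞ ≤ √(2 D_KL(P‖Q))`;
moreover, if `D_KL(P‖Q) < γ²/8` where `γ > 0` is the K-boundary margin of `Q`
(witnessed by the Top-K set `S`), then `‖P - Q‖_∞ < γ/2` and the Top-K set of
`P` equals that of `Q`. -/
theorem supnorm_pinsker_topK_stability {N K : ℕ} (hK : 1 ≤ K) (hKN : K < N)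
    (P Q : Fin N → ℝ)
    (hP0 : ∀ k, 0 ≤ P k) (hP1 : ∑ k, P k = 1)
    (hQ0 : ∀ k, 0 ≤ Q k) (hQ1 : ∑ k, Q k = 1)
    (hsupp : ∀ k, 0 < P k → 0 < Q k)
    (S : Finset (Fin N)) (hScard : S.card = K)
    (γ : ℝ) (hγ : 0 < γ)
    (hmargin : ∀ i ∈ S, ∀ j ∉ S, Q i - Q j ≥ γ) :
    (∀ k, |P k - Q k| ≤
        Real.sqrt (2 * ∑ i, P i * Real.log (P i / Q i))) ∧
      ((∑ i, P i * Real.log (P i / Q i)) < γ ^ 2 / 8 →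
        (∀ k, |P k - Q k| < γ / 2) ∧
          (∀ i ∈ S, ∀ j ∉ S, P j < P i) ∧
          (∀ S' : Finset (Fin N), S'.card = K →
            (∀ i ∈ S', ∀ j ∉ S', P j ≤ P i) → S' = S)) := by
  set KL := ∑ i, P i * Real.log (P i / Q i) with hKLdef
  have hQz : ∀ i, Q i = 0 → P i = 0 := by
    intro i hQi
    by_contra hPi
    exact absurd (hsupp i (lt_of_le_of_ne (hP0 i) (Ne.symm hPi))) (by rw [hQi]; exact lt_irrefl 0)
  have hKL0 : 0 ≤ KL := by
    have h1 : ∑ i, (P i - Q i) ≤ KL :=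
      Finset.sum_le_sum fun i _ => aux_klterm (hP0 i) (hQ0 i) (hQz i)
    have h2 : ∑ i, (P i - Q i) = 0 := by rw [Finset.sum_sub_distrib, hP1, hQ1]; ring
    linarith
  have hPle1 : ∀ k, P k ≤ 1 := fun k =>
    hP1 ▸ Finset.single_le_sum (fun i _ => hP0 i) (Finset.mem_univ k)
  have hQle1 : ∀ k, Q k ≤ 1 := fun k =>
    hQ1 ▸ Finset.single_le_sum (fun i _ => hQ0 i) (Finset.mem_univ k)
  have key : ∀ k, 2 * (P k - Q k) ^ 2 ≤ KL := by
    intro k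
    rcases eq_or_lt_of_le (hQ0 k) with hq0 | hq0
    · -- Q k = 0, hence P k = 0
      have hPk : P k = 0 := hQz k hq0.symm
      rw [hPk, ← hq0]
      simpa using hKL0
    rcases eq_or_lt_of_le (hQle1 k) with hq1 | hq1
    · -- Q k = 1 : all other Q are 0, so all other P are 0, so P k = 1
      have hsQ : ∑ i ∈ Finset.univ.erase k, Q i = 0 := by
        have := Finset.add_sum_erase Finset.univ Q (Finset.mem_univ k)
        rw [hQ1] at this; linarith [this, hq1]
      have hQz' : ∀ i ∈ Finset.univ.erase k, Q i = 0 :=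
        (Finset.sum_eq_zero_iff_of_nonneg fun i _ => hQ0 i).1 hsQ
      have hsP : ∑ i ∈ Finset.univ.erase k, P i = 0 :=
        Finset.sum_eq_zero fun i hi => hQz i (hQz' i hi)
      have hPk : P k = 1 := by
        have := Finset.add_sum_erase Finset.univ P (Finset.mem_univ k)
        rw [hP1] at this; linarith
      rw [hPk, ← hq1]
      simpa using hKL0
    -- main case 0 < Q k < 1
    have hsumP : ∑ i ∈ Finset.univ.erase k, P i = 1 - P k := by
      have := Finset.add_sum_erase Finset.univ P (Finset.mem_univ k)
      rw [hP1] at this; linarith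
    have hsumQ : ∑ i ∈ Finset.univ.erase k, Q i = 1 - Q k := by
      have := Finset.add_sum_erase Finset.univ Q (Finset.mem_univ k)
      rw [hQ1] at this; linarith
    have hB : (0 : ℝ) < 1 - Q k := by linarith
    have e1 : P k * Real.log (P k / Q k) = P k * Real.log (P k) - P k * Real.log (Q k) := by
      rcases eq_or_lt_of_le (hP0 k) with h | h
      · simp [← h]
      · rw [Real.log_div h.ne' hq0.ne']; ring
    have hTail : (1 - P k) * Real.log (1 - P k) - (1 - P k) * Real.log (1 - Q k) ≤
        ∑ i ∈ Finset.univ.erase k, P i * Real.log (P i / Q i) := by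
      rcases eq_or_lt_of_le (sub_nonneg.2 (hPle1 k)) with hA | hA
      · -- 1 - P k = 0
        have hz : ∀ i ∈ Finset.univ.erase k, P i = 0 := by
          refine (Finset.sum_eq_zero_iff_of_nonneg fun i _ => hP0 i).1 ?_
          rw [hsumP, ← hA]
        have : ∑ i ∈ Finset.univ.erase k, P i * Real.log (P i / Q i) = 0 :=
          Finset.sum_eq_zero fun i hi => by rw [hz i hi]; ring
        rw [this, ← hA]; simp
      · set A := 1 - P k
        set B := 1 - Q k
        have hptw : ∀ i ∈ Finset.univ.erase k,
            P i * Real.log (A / B) + P i - Q i * (A / B) ≤ P i * Real.log (P i / Q i) :=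
          fun i _ => aux_logsum (hP0 i) (hQ0 i) hA hB (hQz i)
        have hsum : ∑ i ∈ Finset.univ.erase k,
            (P i * Real.log (A / B) + P i - Q i * (A / B)) = A * Real.log (A / B) := by
          rw [Finset.sum_sub_distrib, Finset.sum_add_distrib, ← Finset.sum_mul,
            ← Finset.sum_mul, hsumP, hsumQ]
          have : B * (A / B) = A := by field_simp
          simp only [A, B] at this ⊢
          linarith
        have hAB : A * Real.log (A / B) = A * Real.log A - A * Real.log B := by
          rw [Real.log_div hA.ne' hB.ne']; ring
        calc A * Real.log A - A * Real.log B = A * Real.log (A / B) := by rw [hAB]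
          _ = ∑ i ∈ Finset.univ.erase k,
              (P i * Real.log (A / B) + P i - Q i * (A / B)) := hsum.symm
          _ ≤ _ := Finset.sum_le_sum hptw
    have hbin := binPinsker hq0 hq1 (hP0 k) (hPle1 k)
    have hKLsplit : KL = P k * Real.log (P k / Q k) +
        ∑ i ∈ Finset.univ.erase k, P i * Real.log (P i / Q i) :=
      (Finset.add_sum_erase Finset.univ (fun i => P i * Real.log (P i / Q i))
        (Finset.mem_univ k)).symm
    rw [hKLsplit, e1]
    linarith
  have first : ∀ k, |P k - Q k| ≤ Real.sqrt (2 * KL) := by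
    intro k
    exact Real.abs_le_sqrt (by nlinarith [key k, hKL0])
  refine ⟨first, fun hKLlt => ?_⟩
  have hlt : ∀ k, |P k - Q k| < γ / 2 := by
    intro k
    refine lt_of_le_of_lt (first k) ?_
    rw [Real.sqrt_lt' (by positivity)]
    nlinarith
  have hstrict : ∀ i ∈ S, ∀ j ∉ S, P j < P i := by
    intro i hi j hj
    have h1 := abs_lt.1 (hlt i)
    have h2 := abs_lt.1 (hlt j)
    have h3 := hmargin i hi j hj
    linarith
  refine ⟨hlt, hstrict, ?_⟩
  intro S' hS'card hP'
  by_cases hsub : S' ⊆ S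
  · exact Finset.eq_of_subset_of_card_le hsub (by rw [hScard, hS'card])
  · obtain ⟨a, ha', haS⟩ := Finset.not_subset.1 hsub
    have hnsub : ¬ S ⊆ S' := by
      intro h
      have := Finset.eq_of_subset_of_card_le h (by rw [hScard, hS'card])
      rw [← this] at ha'
      exact haS ha'
    obtain ⟨b, hb, hbS'⟩ := Finset.not_subset.1 hnsub
    have h1 : P a < P b := hstrict b hb a haS
    have h2 : P b ≤ P a := hP' a ha' b hbS'
    linarith
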